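/- Under the hypotheses of the penalized mixed problem, there exists a constant C₁ depending only on the continuity/coercivity constants such that for all u ∈ H and p ∈ V, ‖u‖_H + |p|_{V̄} + ε‖p‖_V ≤ C₁ · sup over (v,q) ∈ H × V of [a(u,v) + b(v,p) − b(u,q) + ε² c(p,q)] / (‖v‖_H + |q|_{V̄} + ε‖q‖_V). -/
import Mathlib

set_option maxHeartbeats 1000000


/-- The weaker (semi) norm `|q|_{V̄} = sup_{v ≠ 0} b(v,q)/‖v‖_H` on `V`. -/
noncomputable def dualSemiNorm {H V : Type*}
    [NormedAddCommGroup H] [InnerProductSpace ℝ H]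
    [NormedAddCommGroup V] [InnerProductSpace ℝ V]
    (b : H →ₗ[ℝ] V →ₗ[ℝ] ℝ) (q : V) : ℝ :=
  ⨆ v : {v : H // v ≠ 0}, b v q / ‖(v : H)‖

section Aux

variable {H V : Type*}
    [NormedAddCommGroup H] [InnerProductSpace ℝ H]
    [NormedAddCommGroup V] [InnerProductSpace ℝ V]
    (b : H →ₗ[ℝ] V →ₗ[ℝ] ℝ) {C : ℝ}

lemma dsn_bddAbove (hb : ∀ (v : H) (q : V), |b v q| ≤ C * ‖v‖ * ‖q‖) (q : V) :
    BddAbove (Set.range fun v : {v : H // v ≠ 0} => b v q / ‖(v : H)‖) := by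
  refine ⟨|C| * ‖q‖, ?_⟩
  rintro x ⟨v, rfl⟩
  have hv : (0 : ℝ) < ‖(v : H)‖ := norm_pos_iff.mpr v.2
  rw [div_le_iff₀ hv]
  calc b v q ≤ |b v q| := le_abs_self _
    _ ≤ C * ‖(v : H)‖ * ‖q‖ := hb _ _
    _ ≤ |C| * ‖(v : H)‖ * ‖q‖ := by
        have := le_abs_self C
        have h1 : (0:ℝ) ≤ ‖(v : H)‖ * ‖q‖ := by positivity
        nlinarith
    _ = |C| * ‖q‖ * ‖(v : H)‖ := by ring

lemma dsn_nonneg (hb : ∀ (v : H) (q : V), |b v q| ≤ C * ‖v‖ * ‖q‖) (q : V) :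
    0 ≤ dualSemiNorm b q := by
  by_cases h : Nonempty {v : H // v ≠ 0}
  · obtain ⟨v⟩ := h
    have h1 := le_ciSup (dsn_bddAbove b hb q) v
    have h2 := le_ciSup (dsn_bddAbove b hb q) ⟨-(v : H), neg_ne_zero.mpr v.2⟩
    simp only [map_neg, LinearMap.neg_apply, norm_neg, neg_div] at h2
    unfold dualSemiNorm
    linarith
  · rw [not_nonempty_iff] at h
    rw [dualSemiNorm, iSup, Set.range_eq_empty, Real.sSup_empty]

lemma dsn_le (hb : ∀ (v : H) (q : V), |b v q| ≤ C * ‖v‖ * ‖q‖) (v : H) (q : V) :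
    b v q ≤ dualSemiNorm b q * ‖v‖ := by
  by_cases hv : v = 0
  · simp [hv]
  · have hvp : (0 : ℝ) < ‖v‖ := norm_pos_iff.mpr hv
    have h1 : b v q / ‖v‖ ≤ dualSemiNorm b q :=
      le_ciSup (dsn_bddAbove b hb q) ⟨v, hv⟩
    rw [div_le_iff₀ hvp] at h1
    exact h1

lemma dsn_zero : dualSemiNorm b (0 : V) = 0 := by
  by_cases h : Nonempty {v : H // v ≠ 0}
  · simp only [dualSemiNorm, map_zero, zero_div]
    exact ciSup_const
  · rw [not_nonempty_iff] at h
    rw [dualSemiNorm, iSup, Set.range_eq_empty, Real.sSup_empty]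

end Aux

/-- Lower bound (inf-sup stability) part of the two-sided estimate of
Theorem `isomorphism-thm`: the sup of the mixed form quotient dominates
`C₁⁻¹ (‖u‖_H + |p|_{V̄} + ε‖p‖_V)`. -/
theorem stmt5
    {H V : Type*}
    [NormedAddCommGroup H] [InnerProductSpace ℝ H] [CompleteSpace H]
    [NormedAddCommGroup V] [InnerProductSpace ℝ V] [CompleteSpace V]
    (a : H →ₗ[ℝ] H →ₗ[ℝ] ℝ) (c : V →ₗ[ℝ] V →ₗ[ℝ] ℝ) (b : H →ₗ[ℝ] V →ₗ[ℝ] ℝ)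
    (C : ℝ) (hC : 0 < C)
    (ha_symm : ∀ u v : H, a u v = a v u)
    (ha_bound : ∀ u v : H, |a u v| ≤ C * ‖u‖ * ‖v‖)
    (ha_coer : ∀ u : H, C⁻¹ * ‖u‖ ^ 2 ≤ a u u)
    (hc_symm : ∀ p q : V, c p q = c q p)
    (hc_bound : ∀ p q : V, |c p q| ≤ C * ‖p‖ * ‖q‖)
    (hc_coer : ∀ p : V, C⁻¹ * ‖p‖ ^ 2 ≤ c p p)
    (hb_bound : ∀ (v : H) (q : V), |b v q| ≤ C * ‖v‖ * ‖q‖)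
    (ε : ℝ) (hε : 0 < ε) :
    ∃ C₁ : ℝ, 0 < C₁ ∧ ∀ (u : H) (p : V),
      ‖u‖ + dualSemiNorm b p + ε * ‖p‖
        ≤ C₁ * (⨆ vq : H × V,
            (a u vq.1 + b vq.1 p - b u vq.2 + ε ^ 2 * c p vq.2) /
              (‖vq.1‖ + dualSemiNorm b vq.2 + ε * ‖vq.2‖)) := by
  refine ⟨(1 + C) * (2 * C * (C + 2) + 1) + 1, by positivity, ?_⟩
  intro u p
  set F : H × V → ℝ := fun vq =>
    a u vq.1 + b vq.1 p - b u vq.2 + ε ^ 2 * c p vq.2 with hF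
  set D : H × V → ℝ := fun vq =>
    ‖vq.1‖ + dualSemiNorm b vq.2 + ε * ‖vq.2‖ with hD
  have hDnn : ∀ vq : H × V, 0 ≤ D vq := by
    intro vq
    have := dsn_nonneg b hb_bound vq.2
    have : (0:ℝ) ≤ ε * ‖vq.2‖ := by positivity
    simp only [hD]
    have := dsn_nonneg b hb_bound vq.2
    positivity
  -- bound to establish BddAbove
  have hBdd : BddAbove (Set.range fun vq : H × V => F vq / D vq) := by
    set M : ℝ := C * ‖u‖ + dualSemiNorm b p + ‖u‖ + ε * C * ‖p‖ with hM
    have hMnn : 0 ≤ M := by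
      have := dsn_nonneg b hb_bound p
      positivity
    refine ⟨M, ?_⟩
    rintro x ⟨⟨v, q⟩, rfl⟩
    have hqnn := dsn_nonneg b hb_bound q
    have hpnn := dsn_nonneg b hb_bound p
    have hFle : F (v, q) ≤ M * D (v, q) := by
      have h1 : a u v ≤ C * ‖u‖ * ‖v‖ := le_trans (le_abs_self _) (ha_bound u v)
      have h2 : b v p ≤ dualSemiNorm b p * ‖v‖ := dsn_le b hb_bound v p
      have h3 : -(b u q) ≤ dualSemiNorm b q * ‖u‖ := by
        have := dsn_le b hb_bound (-u) q
        simpa [norm_neg] using this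
      have h4 : ε ^ 2 * c p q ≤ ε ^ 2 * (C * ‖p‖ * ‖q‖) := by
        have := le_trans (le_abs_self _) (hc_bound p q)
        nlinarith [sq_nonneg ε]
      have hv : (0:ℝ) ≤ ‖v‖ := norm_nonneg _
      have hq : (0:ℝ) ≤ ‖q‖ := norm_nonneg _
      have hu : (0:ℝ) ≤ ‖u‖ := norm_nonneg _
      have hp : (0:ℝ) ≤ ‖p‖ := norm_nonneg _
      have h4' : ε ^ 2 * c p q ≤ (ε * C * ‖p‖) * (ε * ‖q‖) := by nlinarith
      simp only [hF, hD, hM]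
      nlinarith [mul_nonneg (mul_nonneg hC.le hu) hqnn,
        mul_nonneg (mul_nonneg (mul_nonneg hC.le hu) hε.le) hq,
        mul_nonneg hpnn hqnn,
        mul_nonneg (mul_nonneg hpnn hε.le) hq,
        mul_nonneg hu hv,
        mul_nonneg (mul_nonneg hu hε.le) hq,
        mul_nonneg (mul_nonneg (mul_nonneg hε.le hC.le) hp) hv,
        mul_nonneg (mul_nonneg (mul_nonneg hε.le hC.le) hp) hqnn]
    rcases eq_or_lt_of_le (hDnn (v, q)) with h0 | hpos
    · -- D = 0 forces v = 0, q = 0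
      have hqnn := dsn_nonneg b hb_bound q
      have hv0 : ‖v‖ = 0 := by
        have h1 : (0:ℝ) ≤ ε * ‖q‖ := by positivity
        simp only [hD] at h0
        nlinarith [norm_nonneg v]
      have hq0 : ‖q‖ = 0 := by
        have h1 : (0:ℝ) ≤ ε * ‖q‖ := by positivity
        simp only [hD] at h0
        nlinarith [norm_nonneg v, norm_nonneg q]
      have hv0' : v = 0 := norm_eq_zero.mp hv0
      have hq0' : q = 0 := norm_eq_zero.mp hq0
      subst hv0' hq0'
      simp only [hF, map_zero, LinearMap.zero_apply]
      simpa using hMnn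
    · rw [div_le_iff₀ hpos]
      exact hFle
  set S : ℝ := ⨆ vq : H × V, F vq / D vq with hS
  have hS0 : 0 ≤ S := by
    have := le_ciSup hBdd ((0 : H), (0 : V))
    simpa [hF, map_zero] using this
  have hpnn := dsn_nonneg b hb_bound p
  have hunn : (0:ℝ) ≤ ‖u‖ := norm_nonneg _
  have hpn : (0:ℝ) ≤ ‖p‖ := norm_nonneg _
  -- key1 : coercivity estimate
  have key1 : C⁻¹ * (‖u‖ ^ 2 + (ε * ‖p‖) ^ 2) ≤ S * (‖u‖ + dualSemiNorm b p + ε * ‖p‖) := by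
    have h := le_ciSup hBdd ((u : H), (p : V))
    have hFup : F (u, p) = a u u + ε ^ 2 * c p p := by simp only [hF]; ring
    rcases eq_or_lt_of_le (hDnn (u, p)) with h0 | hpos
    · have hu0 : ‖u‖ = 0 := by
        have h1 : (0:ℝ) ≤ ε * ‖p‖ := by positivity
        simp only [hD] at h0; nlinarith
      have hp0 : ‖p‖ = 0 := by
        have h1 : (0:ℝ) ≤ ε * ‖p‖ := by positivity
        simp only [hD] at h0; nlinarith
      simp only [hD, hu0, hp0] at h0
      have hP0 : dualSemiNorm b p = 0 := by linarith
      rw [hu0, hp0, hP0]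
      ring_nf
      simp
    · rw [div_le_iff₀ hpos] at h
      rw [hFup] at h
      have hca : C⁻¹ * ‖u‖ ^ 2 ≤ a u u := ha_coer u
      have hcc : C⁻¹ * ‖p‖ ^ 2 ≤ c p p := hc_coer p
      have hcc2 : ε ^ 2 * (C⁻¹ * ‖p‖ ^ 2) ≤ ε ^ 2 * c p p :=
        mul_le_mul_of_nonneg_left hcc (sq_nonneg ε)
      simp only [hD] at h
      nlinarith
  -- key2 : dual seminorm bound
  have key2 : dualSemiNorm b p ≤ S + C * ‖u‖ := by
    rw [dualSemiNorm]
    apply Real.iSup_le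
    · rintro ⟨v, hv⟩
      have hvp : (0:ℝ) < ‖v‖ := norm_pos_iff.mpr hv
      have h := le_ciSup hBdd ((v : H), (0 : V))
      have hFv0 : F (v, 0) = a u v + b v p := by simp [hF]
      have hDv0 : D (v, 0) = ‖v‖ := by simp [hD, dsn_zero]
      rw [hFv0, hDv0, div_le_iff₀ hvp] at h
      have ha' : -(a u v) ≤ C * ‖u‖ * ‖v‖ := by
        have := neg_abs_le (a u v)
        have := ha_bound u v
        linarith
      rw [div_le_iff₀ hvp]
      nlinarith
    · have : (0:ℝ) ≤ C * ‖u‖ := by positivity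
      linarith
  -- final arithmetic
  set X := ‖u‖
  set Y := ε * ‖p‖ with hYdef
  set P := dualSemiNorm b p
  have hYnn : 0 ≤ Y := by positivity
  have h1' : X ^ 2 + Y ^ 2 ≤ C * (S * (X + P + Y)) := by
    have := mul_le_mul_of_nonneg_left key1 hC.le
    rwa [← mul_assoc, mul_inv_cancel₀ hC.ne', one_mul] at this
  have hgoal : X + P + Y ≤ ((1 + C) * (2 * C * (C + 2) + 1) + 1) * S := by
    rcases le_or_gt (X + Y) S with hTS | hST
    · nlinarith [mul_nonneg hC.le hS0, mul_le_mul_of_nonneg_left hTS hC.le,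
        mul_nonneg (mul_nonneg hC.le hC.le) hS0,
        mul_nonneg (mul_nonneg (mul_nonneg hC.le hC.le) hC.le) hS0]
    · have hTpos : 0 < X + Y := lt_of_le_of_lt hS0 hST
      have hT2 : (X + Y) ^ 2 ≤ 2 * C * (C + 2) * S * (X + Y) := by
        nlinarith [sq_nonneg (X - Y), mul_nonneg hC.le hS0,
          mul_nonneg (mul_nonneg hC.le hC.le) hS0]
      have hT : X + Y ≤ 2 * C * (C + 2) * S :=
        le_of_mul_le_mul_right (by nlinarith) hTpos
      nlinarith [mul_nonneg hC.le hS0]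
  exact hgoal
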